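/- There exist constants c, C > 0 such that for all ξ with 0 < ξ ≤ 1, −C·ξ ≤ Λ''(ξ) ≤ −c·ξ, where Λ(ξ) = ξ·√(tanh ξ / ξ). -/

import Mathlib

set_option maxHeartbeats 1000000

section TanhAux

lemma hasDerivAt_tanh' (x : ℝ) : HasDerivAt Real.tanh (1 - Real.tanh x ^ 2) x := by
  have h := (Real.hasDerivAt_sinh x).div (Real.hasDerivAt_cosh x) (ne_of_gt (Real.cosh_pos x))
  have he : Real.tanh = fun y => Real.sinh y / Real.cosh y :=
    funext fun y => Real.tanh_eq_sinh_div_cosh y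
  rw [he]
  refine h.congr_deriv ?_
  have hc := Real.cosh_pos x
  simp only [Real.tanh_eq_sinh_div_cosh]
  field_simp

lemma tanh_pos' {x : ℝ} (hx : 0 < x) : 0 < Real.tanh x := by
  rw [Real.tanh_eq_sinh_div_cosh]
  exact div_pos (Real.sinh_pos_iff.2 hx) (Real.cosh_pos x)

lemma mono_aux (f f' : ℝ → ℝ) (hd : ∀ x, HasDerivAt f (f' x) x)
    (h0 : ∀ x, 0 ≤ x → 0 ≤ f' x) : MonotoneOn f (Set.Ici 0) := by
  apply monotoneOn_of_deriv_nonneg (convex_Ici 0)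
  · exact fun x _ => (hd x).continuousAt.continuousWithinAt
  · exact fun x _ => (hd x).differentiableAt.differentiableWithinAt
  · intro x hx
    rw [interior_Ici] at hx
    rw [(hd x).deriv]
    exact h0 x hx.le

lemma tanh_le_self {x : ℝ} (hx : 0 ≤ x) : Real.tanh x ≤ x := by
  have hm := mono_aux (fun w => w - Real.tanh w) (fun w => Real.tanh w ^ 2)
    (fun w => by
      have h := (hasDerivAt_id w).sub (hasDerivAt_tanh' w)
      refine h.congr_deriv ?_
      ring)
    (fun w _ => sq_nonneg _)
  have := hm (Set.self_mem_Ici) hx hx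
  simp only [Real.tanh_zero] at this
  linarith

lemma tanh_ge_cubic {x : ℝ} (hx : 0 ≤ x) : x - x ^ 3 / 3 ≤ Real.tanh x := by
  have hm := mono_aux (fun w => Real.tanh w - w + w ^ 3 / 3)
    (fun w => w ^ 2 - Real.tanh w ^ 2)
    (fun w => by
      have h := ((hasDerivAt_tanh' w).sub (hasDerivAt_id w)).add
        (((hasDerivAt_pow 3 w).div_const 3))
      refine h.congr_deriv ?_
      push_cast
      ring)
    (fun w hw => by
      have h1 := tanh_le_self hw
      have h2' : 0 ≤ Real.tanh w := by
        rcases eq_or_lt_of_le hw with h | h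
        · simp [← h]
        · exact (tanh_pos' h).le
      show 0 ≤ w ^ 2 - Real.tanh w ^ 2
      nlinarith)
  have := hm (Set.self_mem_Ici) hx hx
  simp only [Real.tanh_zero] at this
  norm_num at this
  linarith

end TanhAux

section KeyPoly

lemma key_upper_c {x c : ℝ} (hx : 0 < x) (hx1 : x ≤ 1) (hc : 0 ≤ c) (hc' : 3*c ≤ x^3) :
    4*x*(x - x^3/3 + c)*(1-(x - x^3/3 + c)^2)*(1-x*(x - x^3/3 + c))
      - ((x - x^3/3 + c) + x*(1-(x - x^3/3 + c)^2))^2 ≤ -(1/2)*x^4 := by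
  have hxp : (0:ℝ) ≤ x := hx.le
  have hx2 : x^2 ≤ 1 := pow_le_one₀ hxp hx1
  obtain ⟨g1, hg1⟩ : ∃ g1 : ℝ, g1 = -28/3*x^3 + 52/3*x^5 - 38/3*x^7 + 4*x^9 - 4/9*x^11 := ⟨_, rfl⟩
  obtain ⟨g2, hg2⟩ : ∃ g2 : ℝ, g2 = -1 - 8*x^2 + 20*x^4 - 8*x^6 + 2*x^8 := ⟨_, rfl⟩
  have hp0 : -7/2*x^4 + 56/9*x^6 - 44/9*x^8 + 56/27*x^10 - 4/9*x^12 + 1/27*x^14 ≤ 0 := by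
    nlinarith [hx2, pow_nonneg hxp 4, pow_nonneg hxp 6, pow_nonneg hxp 8, pow_nonneg hxp 10,
      mul_nonneg (pow_nonneg hxp 4) (sq_nonneg (x^2-1)),
      mul_nonneg (pow_nonneg hxp 6) (sq_nonneg (x^2-1)),
      mul_nonneg (pow_nonneg hxp 8) (sq_nonneg (x^2-1)),
      mul_nonneg (pow_nonneg hxp 10) (sq_nonneg (x^2-1))]
  have hW1 : (-7/2*x^4 + 56/9*x^6 - 44/9*x^8 + 56/27*x^10 - 4/9*x^12 + 1/27*x^14)
      + x^3/3 * (g1 + x^3/3 * g2) ≤ 0 := by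
    rw [hg1, hg2]
    nlinarith [hx2, pow_nonneg hxp 4, pow_nonneg hxp 6, pow_nonneg hxp 8, pow_nonneg hxp 10,
      pow_nonneg hxp 12,
      mul_nonneg (pow_nonneg hxp 4) (sq_nonneg (x^2-1)),
      mul_nonneg (pow_nonneg hxp 6) (sq_nonneg (x^2-1)),
      mul_nonneg (pow_nonneg hxp 8) (sq_nonneg (x^2-1)),
      mul_nonneg (pow_nonneg hxp 10) (sq_nonneg (x^2-1))]
  have hW2 : (-7/2*x^4 + 56/9*x^6 - 44/9*x^8 + 56/27*x^10 - 4/9*x^12 + 1/27*x^14)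
      + x^3/3 * g1 ≤ 0 := by
    rw [hg1]
    nlinarith [hx2, pow_nonneg hxp 4, pow_nonneg hxp 6, pow_nonneg hxp 8, pow_nonneg hxp 10,
      pow_nonneg hxp 12,
      mul_nonneg (pow_nonneg hxp 4) (sq_nonneg (x^2-1)),
      mul_nonneg (pow_nonneg hxp 6) (sq_nonneg (x^2-1)),
      mul_nonneg (pow_nonneg hxp 8) (sq_nonneg (x^2-1)),
      mul_nonneg (pow_nonneg hxp 10) (sq_nonneg (x^2-1))]
  have t1 : 3*x^2*c^4 ≤ x^5*c^3 := by
    nlinarith [mul_nonneg (mul_nonneg (sq_nonneg x) (pow_nonneg hc 3)) (sub_nonneg.2 hc')]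
  have t2 : 12*x^3*c^3 ≤ 4*x^6*c^2 := by
    nlinarith [mul_nonneg (mul_nonneg (pow_nonneg hxp 3) (sq_nonneg c)) (sub_nonneg.2 hc')]
  have hcc : c^2 ≤ x^3/3 * c := by nlinarith [mul_nonneg hc (sub_nonneg.2 hc')]
  have hcx : c ≤ x^3/3 := by linarith
  have hdrop1 : 0 ≤ 2*x*c^3 := by positivity
  have hdrop2 : 0 ≤ 3*x^5*c^3 := by positivity
  have hmain : c * g1 + c^2 * g2 ≤ -(-7/2*x^4 + 56/9*x^6 - 44/9*x^8 + 56/27*x^10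
      - 4/9*x^12 + 1/27*x^14) := by
    rcases le_or_gt 0 g2 with hg2p | hg2n
    · have h1 : c^2 * g2 ≤ (x^3/3*c) * g2 := mul_le_mul_of_nonneg_right hcc hg2p
      rcases le_or_gt 0 (g1 + x^3/3 * g2) with hhp | hhn
      · have h2 : c * (g1 + x^3/3 * g2) ≤ (x^3/3) * (g1 + x^3/3 * g2) :=
          mul_le_mul_of_nonneg_right hcx hhp
        nlinarith [h1, h2, hW1]
      · have h2 : c * (g1 + x^3/3 * g2) ≤ 0 :=
          mul_nonpos_of_nonneg_of_nonpos hc hhn.le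
        nlinarith [h1, h2, hp0]
    · have h1 : c^2 * g2 ≤ 0 := mul_nonpos_of_nonneg_of_nonpos (sq_nonneg c) hg2n.le
      rcases le_or_gt 0 g1 with hgp | hgn
      · have h2 : c * g1 ≤ (x^3/3) * g1 := mul_le_mul_of_nonneg_right hcx hgp
        nlinarith [h1, h2, hW2]
      · have h2 : c * g1 ≤ 0 := mul_nonpos_of_nonneg_of_nonpos hc hgn.le
        nlinarith [h1, h2, hp0]
  rw [hg1, hg2] at hmain
  nlinarith [hmain, t1, t2, hdrop1, hdrop2]

lemma key_upper {x u : ℝ} (hx : 0 < x) (hx1 : x ≤ 1) (h1 : x - x^3/3 ≤ u) (h2 : u ≤ x) :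
    4*x*u*(1-u^2)*(1-x*u) - (u + x*(1-u^2))^2 ≤ -(1/2)*x^4 := by
  have h := key_upper_c hx hx1 (c := u - x + x^3/3) (by linarith) (by linarith)
  ring_nf at h ⊢
  linarith

lemma key_lower {x u : ℝ} (hx : 0 < x) (hx1 : x ≤ 1) (h1 : x - x^3/3 ≤ u) (h2 : u ≤ x) :
    -5*x^4 ≤ 4*x*u*(1-u^2)*(1-x*u) - (u + x*(1-u^2))^2 := by
  nlinarith [sq_nonneg (x-u), sq_nonneg (x+u), sq_nonneg (x*u), mul_pos hx hx,
    sq_nonneg (x*u-1), mul_nonneg (sub_nonneg.2 h2) hx.le,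
    mul_nonneg (mul_nonneg (sub_nonneg.2 h2) hx.le) hx.le,
    sq_nonneg u, sq_nonneg (u - x + x^3/3)]

end KeyPoly

section DerivAux

noncomputable def FF (x : ℝ) : ℝ := Real.sqrt (x * Real.tanh x)

noncomputable def d1 (x : ℝ) : ℝ :=
  (Real.tanh x + x * (1 - Real.tanh x ^ 2)) / (2 * Real.sqrt (x * Real.tanh x))

lemma g_pos {x : ℝ} (hx : 0 < x) : 0 < x * Real.tanh x := mul_pos hx (tanh_pos' hx)

lemma hasDerivAt_g (x : ℝ) :
    HasDerivAt (fun y => y * Real.tanh y)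
      (Real.tanh x + x * (1 - Real.tanh x ^ 2)) x := by
  have h := (hasDerivAt_id x).mul (hasDerivAt_tanh' x)
  refine h.congr_deriv ?_
  simp [id]

lemma hasDerivAt_FF {x : ℝ} (hx : 0 < x) : HasDerivAt FF (d1 x) x := by
  have h := (Real.hasDerivAt_sqrt (g_pos hx).ne').comp x (hasDerivAt_g x)
  refine h.congr_deriv ?_
  unfold d1
  ring

lemma hasDerivAt_A (x : ℝ) :
    HasDerivAt (fun y => Real.tanh y + y * (1 - Real.tanh y ^ 2))
      (2 * (1 - Real.tanh x ^ 2) * (1 - x * Real.tanh x)) x := by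
  have h := (hasDerivAt_tanh' x).add
    ((hasDerivAt_id x).mul ((hasDerivAt_const x (1:ℝ)).sub ((hasDerivAt_tanh' x).pow 2)))
  refine h.congr_deriv ?_
  simp [id]
  ring

lemma hasDerivAt_d1 {x : ℝ} (hx : 0 < x) :
    HasDerivAt d1
      ((2 * (1 - Real.tanh x ^ 2) * (1 - x * Real.tanh x) * (2 * Real.sqrt (x * Real.tanh x))
        - (Real.tanh x + x * (1 - Real.tanh x ^ 2)) *
          (2 * ((Real.tanh x + x * (1 - Real.tanh x ^ 2)) / (2 * Real.sqrt (x * Real.tanh x)))))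
        / (2 * Real.sqrt (x * Real.tanh x))^2) x := by
  have hs : (0:ℝ) < Real.sqrt (x * Real.tanh x) := Real.sqrt_pos.2 (g_pos hx)
  have hS : HasDerivAt (fun y => 2 * Real.sqrt (y * Real.tanh y))
      (2 * ((Real.tanh x + x * (1 - Real.tanh x ^ 2)) / (2 * Real.sqrt (x * Real.tanh x)))) x := by
    have h := ((Real.hasDerivAt_sqrt (g_pos hx).ne').comp x (hasDerivAt_g x)).const_mul 2
    refine h.congr_deriv ?_
    ring
  exact (hasDerivAt_A x).div hS (by positivity)

lemma form_eq {a b s : ℝ} (hs : 0 < s) :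
    (b*(2*s) - a*(2*(a/(2*s))))/(2*s)^2 = (2*s^2*b - a^2)/(4*s^3) := by
  field_simp
  ring

lemma final_bound {x t s : ℝ} (hx : 0 < x) (hx1 : x ≤ 1) (ht1 : x - x^3/3 ≤ t) (ht2 : t ≤ x)
    (hs : 0 < s) (hs2 : s^2 = x*t) :
    -5*x ≤ (2*(x*t)*(2*(1-t^2)*(1-x*t)) - (t + x*(1-t^2))^2)/(4*s^3) ∧
    (2*(x*t)*(2*(1-t^2)*(1-x*t)) - (t + x*(1-t^2))^2)/(4*s^3) ≤ -(1/8)*x := by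
  have hNle : 2*(x*t)*(2*(1-t^2)*(1-x*t)) - (t + x*(1-t^2))^2 ≤ -(1/2)*x^4 := by
    have := key_upper hx hx1 ht1 ht2
    nlinarith [this]
  have hNge : -5*x^4 ≤ 2*(x*t)*(2*(1-t^2)*(1-x*t)) - (t + x*(1-t^2))^2 := by
    have := key_lower hx hx1 ht1 ht2
    nlinarith [this]
  have hsle : s ≤ x := by nlinarith [hs.le, hx.le]
  have hx2 : x^2 ≤ 1 := pow_le_one₀ hx.le hx1
  have haux : x*(x - x^3/3) ≤ x*t := mul_le_mul_of_nonneg_left ht1 hx.le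
  have haux2 : (0:ℝ) ≤ x^2*(1-x^2) := mul_nonneg (sq_nonneg x) (by linarith)
  have hst : 2/3*x^2 ≤ s^2 := by nlinarith [haux, haux2]
  have hsge : 2/3*x ≤ s := by nlinarith [hst, hs.le, hx.le, mul_nonneg hs.le hx.le]
  have hs3le : s^3 ≤ x^3 := pow_le_pow_left₀ hs.le hsle 3
  have hs3ge : x^3/4 ≤ s^3 := by
    have := pow_le_pow_left₀ (by positivity : (0:ℝ) ≤ 2/3*x) hsge 3
    nlinarith [this, pow_nonneg hx.le 3]
  have h4s3 : (0:ℝ) < 4*s^3 := by positivity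
  constructor
  · rw [le_div_iff₀ h4s3]
    have haux3 : 20*x*(x^3/4) ≤ 20*x*s^3 := mul_le_mul_of_nonneg_left hs3ge (by positivity)
    nlinarith [hNge, haux3]
  · rw [div_le_iff₀ h4s3]
    have haux4 : x/2*s^3 ≤ x/2*x^3 := mul_le_mul_of_nonneg_left hs3le (by positivity)
    nlinarith [hNle, haux4]

end DerivAux

/-- The Whitham dispersion relation, `Λ ξ = ξ * √(tanh ξ / ξ)`. -/
noncomputable def Lam (ξ : ℝ) : ℝ := ξ * Real.sqrt (Real.tanh ξ / ξ)

lemma Lam_eq_FF {x : ℝ} (hx : 0 < x) : Lam x = FF x := by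
  unfold Lam FF
  rw [show x * Real.tanh x = x^2 * (Real.tanh x / x) by field_simp,
    Real.sqrt_mul (sq_nonneg x), Real.sqrt_sq hx.le]

lemma deriv_Lam_eq {x : ℝ} (hx : 0 < x) : deriv Lam x = d1 x := by
  have hev : Lam =ᶠ[nhds x] FF :=
    Filter.eventuallyEq_of_mem (Ioi_mem_nhds hx) (fun y hy => Lam_eq_FF hy)
  rw [hev.deriv_eq, (hasDerivAt_FF hx).deriv]

/-- For `0 < ξ ≤ 1`, `Λ''(ξ)` is comparable to `-ξ`. -/
theorem deriv2_Lam_low_freq :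
    ∃ c > (0 : ℝ), ∃ C > (0 : ℝ), ∀ ξ : ℝ, 0 < ξ → ξ ≤ 1 →
      -C * ξ ≤ deriv (deriv Lam) ξ ∧ deriv (deriv Lam) ξ ≤ -c * ξ := by
  refine ⟨1/8, by norm_num, 5, by norm_num, fun ξ hξ hξ1 => ?_⟩
  have hev : deriv Lam =ᶠ[nhds ξ] d1 :=
    Filter.eventuallyEq_of_mem (Ioi_mem_nhds hξ) (fun y hy => deriv_Lam_eq hy)
  have hs : (0:ℝ) < Real.sqrt (ξ * Real.tanh ξ) := Real.sqrt_pos.2 (g_pos hξ)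
  have hs2 : (Real.sqrt (ξ * Real.tanh ξ))^2 = ξ * Real.tanh ξ :=
    Real.sq_sqrt (g_pos hξ).le
  have h2nd : deriv (deriv Lam) ξ
      = (2*(ξ * Real.tanh ξ)*(2*(1-Real.tanh ξ^2)*(1-ξ*Real.tanh ξ))
        - (Real.tanh ξ + ξ*(1-Real.tanh ξ^2))^2) / (4*(Real.sqrt (ξ * Real.tanh ξ))^3) := by
    rw [hev.deriv_eq, (hasDerivAt_d1 hξ).deriv, form_eq hs, hs2]
  rw [h2nd]
  have hb := final_bound hξ hξ1 (tanh_ge_cubic hξ.le) (tanh_le_self hξ.le) hs hs2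
  constructor
  · have := hb.1; linarith
  · have := hb.2; linarith
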